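/- Let L be an n×n invertible SDDM matrix with integer entries in [-U, U], where U ≥ 2 and n ≥ 2. Then for every index j ∈ [n], L_{jj} · (L⁻¹)_{jj} ≤ n²U ≤ (nU)²; equivalently, log_{nU}(L_{jj}(L⁻¹)_{jj}) ≤ 2. -/

import Mathlib

open Finset Matrix


lemma offdiag_to_double {n : ℕ} (f : Fin n → Fin n → ℝ) :
    ∑ p ∈ (Finset.univ : Finset (Fin n)).offDiag, f p.1 p.2
      = ∑ i, ∑ j ∈ Finset.univ.filter (fun j => j ≠ i), f i j := by
  have h : (Finset.univ : Finset (Fin n)).offDiag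
      = (Finset.univ ×ˢ Finset.univ).filter (fun p => p.1 ≠ p.2) := by
    ext p; simp [Finset.mem_offDiag]
  rw [h, Finset.sum_filter, Finset.sum_product]
  refine Finset.sum_congr rfl fun i _ => ?_
  rw [Finset.sum_filter]
  exact Finset.sum_congr rfl fun j _ => by simp [ne_comm]

lemma quad_expand {n : ℕ} (L : Matrix (Fin n) (Fin n) ℝ) (y : Fin n → ℝ) :
    y ⬝ᵥ L.mulVec y =
      (∑ i, L i i * y i ^ 2)
      + ∑ i, ∑ j ∈ Finset.univ.filter (fun j => j ≠ i), L i j * (y i * y j) := by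
  simp only [dotProduct, Matrix.mulVec, Finset.mul_sum]
  rw [← Finset.sum_add_distrib]
  refine Finset.sum_congr rfl fun i _ => ?_
  rw [← Finset.sum_filter_add_sum_filter_not Finset.univ (fun j => j ≠ i)
    (fun j => y i * (L i j * y j))]
  have h1 : Finset.univ.filter (fun j => ¬ j ≠ i) = {i} := by
    ext j; simp
  rw [h1, Finset.sum_singleton, add_comm]
  congr 1
  · ring
  · exact Finset.sum_congr rfl fun j _ => by ring

lemma quad_id {n : ℕ} (L : Matrix (Fin n) (Fin n) ℝ)
    (hsymm : L.IsSymm) (hoff : ∀ i j, i ≠ j → L i j ≤ 0) (y : Fin n → ℝ) :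
    y ⬝ᵥ L.mulVec y =
      (∑ i, (L i i - ∑ j ∈ Finset.univ.filter (fun j => j ≠ i), |L i j|) * y i ^ 2)
      + (∑ p ∈ Finset.univ.offDiag, |L p.1 p.2| * (y p.1 - y p.2) ^ 2) / 2 := by
  have hsym' : ∀ i j : Fin n, L j i = L i j := fun i j => hsymm.apply i j
  have hswap : ∀ f : Fin n → Fin n → ℝ,
      ∑ p ∈ (Finset.univ : Finset (Fin n)).offDiag, f p.1 p.2
        = ∑ p ∈ (Finset.univ : Finset (Fin n)).offDiag, f p.2 p.1 := by
    intro f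
    apply Finset.sum_nbij' (fun p => (p.2, p.1)) (fun p => (p.2, p.1)) <;>
      simp [Finset.mem_offDiag, eq_comm, ne_comm]
  -- rewrite the half-sum
  have key : (∑ p ∈ Finset.univ.offDiag, |L p.1 p.2| * (y p.1 - y p.2) ^ 2) / 2
      = (∑ p ∈ Finset.univ.offDiag, |L p.1 p.2| * y p.1 ^ 2)
        - ∑ p ∈ Finset.univ.offDiag, |L p.1 p.2| * (y p.1 * y p.2) := by
    have e1 : ∑ p ∈ (Finset.univ : Finset (Fin n)).offDiag, |L p.1 p.2| * y p.2 ^ 2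
        = ∑ p ∈ (Finset.univ : Finset (Fin n)).offDiag, |L p.1 p.2| * y p.1 ^ 2 := by
      rw [hswap (fun a b => |L a b| * y b ^ 2)]
      exact Finset.sum_congr rfl fun p _ => by rw [hsym' p.2 p.1]
    have e2 : ∀ p : Fin n × Fin n, |L p.1 p.2| * (y p.1 - y p.2) ^ 2
        = (|L p.1 p.2| * y p.1 ^ 2 + |L p.1 p.2| * y p.2 ^ 2)
          - 2 * (|L p.1 p.2| * (y p.1 * y p.2)) := fun p => by ring
    rw [Finset.sum_congr rfl fun p _ => e2 p, Finset.sum_sub_distrib,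
      Finset.sum_add_distrib, e1, ← Finset.mul_sum]
    ring
  rw [quad_expand, key]
  rw [offdiag_to_double (fun a b => |L a b| * y a ^ 2),
    offdiag_to_double (fun a b => |L a b| * (y a * y b))]
  have habs : ∀ i, ∀ j ∈ Finset.univ.filter (fun j => j ≠ i), |L i j| = - L i j :=
    fun i j hj => abs_of_nonpos (hoff i j (by simp at hj; exact fun h => hj h.symm))
  have h2 : ∀ i : Fin n, ∑ j ∈ Finset.univ.filter (fun j => j ≠ i), |L i j| * (y i * y j)
      = - ∑ j ∈ Finset.univ.filter (fun j => j ≠ i), L i j * (y i * y j) := by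
    intro i
    rw [← Finset.sum_neg_distrib]
    exact Finset.sum_congr rfl fun j hj => by rw [habs i j hj]; ring
  have h3 : ∀ i : Fin n, ∑ j ∈ Finset.univ.filter (fun j => j ≠ i), |L i j| * y i ^ 2
      = (∑ j ∈ Finset.univ.filter (fun j => j ≠ i), |L i j|) * y i ^ 2 := by
    intro i; rw [Finset.sum_mul]
  rw [Finset.sum_congr rfl fun i _ => h2 i, Finset.sum_congr rfl fun i _ => h3 i,
    Finset.sum_neg_distrib]
  rw [Finset.sum_congr rfl (fun i (_ : i ∈ Finset.univ) =>
    sub_mul (L i i) (∑ j ∈ Finset.univ.filter (fun j => j ≠ i), |L i j|) (y i ^ 2)),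
    Finset.sum_sub_distrib]
  ring



lemma getVert_eq_support_get {V : Type*} {G : SimpleGraph V} {u v : V} (p : G.Walk u v) :
    ∀ (t : ℕ) (ht : t < p.support.length), p.support.get ⟨t, ht⟩ = p.getVert t := by
  induction p with
  | nil =>
    intro t ht
    simp [SimpleGraph.Walk.support_nil] at ht
    subst ht
    rfl
  | cons h q ih =>
    intro t ht
    cases t with
    | zero => simp [SimpleGraph.Walk.support_cons, SimpleGraph.Walk.getVert_zero]
    | succ s =>
      simp only [SimpleGraph.Walk.support_cons, SimpleGraph.Walk.getVert_cons_succ]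
      simp only [List.get_eq_getElem, List.getElem_cons_succ]
      exact ih s (by simpa using ht)



def adjGraph {n : ℕ} (L : Matrix (Fin n) (Fin n) ℝ) (hsymm : L.IsSymm) : SimpleGraph (Fin n) where
  Adj i j := i ≠ j ∧ L i j ≠ 0
  symm := by
    refine ⟨fun i j h => ?_⟩
    exact ⟨h.1.symm, by rw [← hsymm.apply j i]; exact h.2⟩
  loopless := ⟨fun i h => h.1 rfl⟩

lemma adjGraph_adj {n : ℕ} (L : Matrix (Fin n) (Fin n) ℝ) (hsymm : L.IsSymm) (i j : Fin n) :
    (adjGraph L hsymm).Adj i j ↔ i ≠ j ∧ L i j ≠ 0 := Iff.rfl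

section
variable {n : ℕ} {L : Matrix (Fin n) (Fin n) ℝ}

-- kernel vector in the degenerate case
lemma kernel_case (hsymm : L.IsSymm)
    (hoff : ∀ i j, i ≠ j → L i j ≤ 0)
    (hz0 : ∀ v, (adjGraph L hsymm).Reachable i0 v →
      L v v - ∑ j ∈ Finset.univ.filter (fun j => j ≠ v), |L v j| = 0)
    (hinv : IsUnit L) : False := by
  classical
  set G := adjGraph L hsymm with hG
  set w : Fin n → ℝ := fun i => if G.Reachable i0 i then 1 else 0 with hwdef
  have hw : L.mulVec w = 0 := by
    funext i
    show ∑ j, L i j * w j = 0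
    by_cases hri : G.Reachable i0 i
    · have h1 : ∀ j, L i j * w j = L i j := by
        intro j
        by_cases hrj : G.Reachable i0 j
        · simp [hwdef, hrj]
        · have : L i j = 0 := by
            by_contra hne
            have hij : i ≠ j := fun h => hrj (h ▸ hri)
            exact hrj (hri.trans (SimpleGraph.Adj.reachable ⟨hij, hne⟩))
          simp [this]
      rw [Finset.sum_congr rfl fun j _ => h1 j]
      rw [← Finset.sum_filter_add_sum_filter_not Finset.univ (fun j => j ≠ i) (fun j => L i j)]
      have h2 : Finset.univ.filter (fun j => ¬ j ≠ i) = {i} := by ext j; simp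
      have h3 : ∑ j ∈ Finset.univ.filter (fun j => j ≠ i), L i j
          = - ∑ j ∈ Finset.univ.filter (fun j => j ≠ i), |L i j| := by
        rw [← Finset.sum_neg_distrib]
        refine Finset.sum_congr rfl fun j hj => ?_
        have hji : j ≠ i := by simpa using hj
        rw [abs_of_nonpos (hoff i j hji.symm)]; ring
      rw [h2, Finset.sum_singleton, h3]
      have := hz0 i hri
      linarith
    · refine Finset.sum_eq_zero fun j _ => ?_
      by_cases hrj : G.Reachable i0 j
      · have : L i j = 0 := by
          by_contra hne
          have hij : j ≠ i := fun h => hri (h ▸ hrj)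
          have hji : L j i ≠ 0 := by rw [← hsymm.apply i j] at hne; · exact hne
          exact hri (hrj.trans (SimpleGraph.Adj.reachable ⟨hij, hji⟩))
        simp [this]
      · simp [hwdef, hrj]
  have hw0 : w = 0 := by
    have h1 : L⁻¹.mulVec (L.mulVec w) = w := by
      rw [Matrix.mulVec_mulVec, Matrix.nonsing_inv_mul L ((Matrix.isUnit_iff_isUnit_det L).mp hinv),
        Matrix.one_mulVec]
    rw [hw, Matrix.mulVec_zero] at h1
    exact h1.symm
  have : w i0 = 1 := by simp [hwdef, SimpleGraph.Reachable.refl]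
  rw [hw0] at this
  simpa using this
end

section
variable {n : ℕ} {L : Matrix (Fin n) (Fin n) ℝ}

lemma quad_nonneg (hsymm : L.IsSymm) (hoff : ∀ i j, i ≠ j → L i j ≤ 0)
    (hdd : ∀ i, ∑ j ∈ Finset.univ.filter (fun j => j ≠ i), |L i j| ≤ L i i)
    (y : Fin n → ℝ) : 0 ≤ y ⬝ᵥ L.mulVec y := by
  rw [quad_id L hsymm hoff y]
  have h1 : 0 ≤ ∑ i, (L i i - ∑ j ∈ Finset.univ.filter (fun j => j ≠ i), |L i j|) * y i ^ 2 :=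
    Finset.sum_nonneg fun i _ => mul_nonneg (by linarith [hdd i]) (sq_nonneg _)
  have h2 : 0 ≤ ∑ p ∈ Finset.univ.offDiag, |L p.1 p.2| * (y p.1 - y p.2) ^ 2 :=
    Finset.sum_nonneg fun p _ => mul_nonneg (abs_nonneg _) (sq_nonneg _)
  linarith

lemma key_bound (hsymm : L.IsSymm) (hoff : ∀ i j, i ≠ j → L i j ≤ 0)
    (hdd : ∀ i, ∑ j ∈ Finset.univ.filter (fun j => j ≠ i), |L i j| ≤ L i i)
    (hint : ∀ i j, ∃ z : ℤ, L i j = (z : ℝ))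
    (hinv : IsUnit L) (y : Fin n → ℝ) (i0 : Fin n) :
    y i0 ^ 2 ≤ 2 * n * (y ⬝ᵥ L.mulVec y) := by
  classical
  set G := adjGraph L hsymm with hG
  set sl : Fin n → ℝ := fun i => L i i - ∑ j ∈ Finset.univ.filter (fun j => j ≠ i), |L i j|
    with hsl
  have hsl_nonneg : ∀ i, 0 ≤ sl i := fun i => by simp only [hsl]; linarith [hdd i]
  have hsl_int : ∀ i, ∃ z : ℤ, sl i = (z : ℝ) := by
    intro i
    obtain ⟨zd, hzd⟩ := hint i i
    have : ∀ j ∈ Finset.univ.filter (fun j => j ≠ i), ∃ z : ℤ, |L i j| = (z : ℝ) := by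
      intro j _
      obtain ⟨z, hz⟩ := hint i j
      exact ⟨|z|, by rw [hz]; push_cast; rfl⟩
    choose zf hzf using this
    refine ⟨zd - ∑ j ∈ (Finset.univ.filter (fun j => j ≠ i)).attach, zf j.1 j.2, ?_⟩
    simp only [hsl]
    rw [← Finset.sum_attach (Finset.univ.filter (fun j => j ≠ i)) (fun j => |L i j|)]
    push_cast
    rw [hzd]
    congr 1
    exact Finset.sum_congr rfl fun j _ => hzf j.1 j.2
  have habs1 : ∀ i j, L i j ≠ 0 → 1 ≤ |L i j| := by
    intro i j h
    obtain ⟨z, hz⟩ := hint i j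
    rw [hz] at h ⊢
    have hz0 : z ≠ 0 := by exact_mod_cast h
    calc (1:ℝ) = ((1:ℤ):ℝ) := by norm_num
    _ ≤ ((|z|:ℤ):ℝ) := by exact_mod_cast Int.one_le_abs hz0
    _ = |(z:ℝ)| := by push_cast; rfl
  by_cases hex : ∃ v, G.Reachable i0 v ∧ 1 ≤ sl v
  · obtain ⟨v, hr, hsv⟩ := hex
    obtain ⟨w0⟩ := hr
    set q : G.Walk i0 v := w0.toPath.1 with hq
    have hqp : q.IsPath := w0.toPath.2
    set k := q.length with hk
    have hlen : q.support.length = k + 1 := q.length_support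
    have hcard : k + 1 ≤ n := by
      have h := hqp.support_nodup.length_le_card
      rwa [hlen, Fintype.card_fin] at h
    set g : ℕ → Fin n := q.getVert with hgdef
    have hinj : ∀ a b, a ≤ k → b ≤ k → g a = g b → a = b := by
      intro a b ha hb hab
      have ha' : a < q.support.length := by omega
      have hb' : b < q.support.length := by omega
      have := List.nodup_iff_injective_get.mp hqp.support_nodup
        (show q.support.get ⟨a, ha'⟩ = q.support.get ⟨b, hb'⟩ by
          rw [getVert_eq_support_get, getVert_eq_support_get]; exact hab)
      exact Fin.mk.inj_iff.mp this
    have hadj : ∀ t, t < k → G.Adj (g t) (g (t + 1)) := fun t ht =>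
      q.adj_getVert_succ ht
    set f : ℕ → ℝ := fun t => y (g t) with hf
    set a : ℕ → ℝ := fun t => if t < k then f t - f (t + 1) else y v with ha
    have hsum : ∑ t ∈ Finset.range (k + 1), a t = y i0 := by
      rw [Finset.sum_range_succ]
      have h1 : ∀ t ∈ Finset.range k, a t = f t - f (t + 1) := by
        intro t ht
        simp only [ha, if_pos (Finset.mem_range.mp ht)]
      rw [Finset.sum_congr rfl h1, Finset.sum_range_sub' f k]
      have h2 : a k = y v := by simp [ha]
      have h3 : f 0 = y i0 := by simp [hf, hgdef, q.getVert_zero]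
      have h4 : f k = y v := by
        simp only [hf, hgdef, hk]
        rw [q.getVert_length]
      rw [h2, h3, h4]; ring
    have hcs : y i0 ^ 2 ≤ (k + 1 : ℝ) * ∑ t ∈ Finset.range (k + 1), a t ^ 2 := by
      rw [← hsum]
      have := sq_sum_le_card_mul_sum_sq (s := Finset.range (k + 1)) (f := a)
      simpa using this
    -- now bound the sum of squares
    set S1 : ℝ := ∑ i, sl i * y i ^ 2 with hS1
    set S2 : ℝ := ∑ p ∈ Finset.univ.offDiag, |L p.1 p.2| * (y p.1 - y p.2) ^ 2 with hS2
    have hS1nn : 0 ≤ S1 := Finset.sum_nonneg fun i _ =>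
      mul_nonneg (hsl_nonneg i) (sq_nonneg _)
    have hb1 : y v ^ 2 ≤ S1 := by
      have h1 : y v ^ 2 ≤ sl v * y v ^ 2 := le_mul_of_one_le_left (sq_nonneg _) hsv
      have h2 : sl v * y v ^ 2 ≤ S1 :=
        Finset.single_le_sum (fun i _ => mul_nonneg (hsl_nonneg i) (sq_nonneg _))
          (Finset.mem_univ v)
      linarith
    have hb2 : ∑ t ∈ Finset.range k, (f t - f (t + 1)) ^ 2 ≤ S2 := by
      set e : ℕ → Fin n × Fin n := fun t => (g t, g (t + 1)) with he
      have heinj : ∀ s ∈ Finset.range k, ∀ t ∈ Finset.range k, e s = e t → s = t := by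
        intro s hs t ht hst
        have h1 : g s = g t := congrArg Prod.fst hst
        exact hinj s t (Nat.le_of_lt (Finset.mem_range.mp hs))
          (Nat.le_of_lt (Finset.mem_range.mp ht)) h1
      have hsub : (Finset.range k).image e ⊆ Finset.univ.offDiag := by
        intro p hp
        obtain ⟨t, ht, rfl⟩ := Finset.mem_image.mp hp
        have hadj' := hadj t (Finset.mem_range.mp ht)
        rw [Finset.mem_offDiag]
        exact ⟨Finset.mem_univ _, Finset.mem_univ _, ((adjGraph_adj L hsymm _ _).mp hadj').1⟩
      calc ∑ t ∈ Finset.range k, (f t - f (t + 1)) ^ 2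
          ≤ ∑ t ∈ Finset.range k, |L (g t) (g (t+1))| * (f t - f (t + 1)) ^ 2 := by
            refine Finset.sum_le_sum fun t ht => ?_
            refine le_mul_of_one_le_left (sq_nonneg _) ?_
            exact habs1 _ _ ((adjGraph_adj L hsymm _ _).mp (hadj t (Finset.mem_range.mp ht))).2
        _ = ∑ p ∈ (Finset.range k).image e, |L p.1 p.2| * (y p.1 - y p.2) ^ 2 := by
            rw [Finset.sum_image heinj]
        _ ≤ S2 := Finset.sum_le_sum_of_subset_of_nonneg hsub
            (fun p _ _ => mul_nonneg (abs_nonneg _) (sq_nonneg _))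
    have hsq : ∑ t ∈ Finset.range (k + 1), a t ^ 2
        = (∑ t ∈ Finset.range k, (f t - f (t + 1)) ^ 2) + y v ^ 2 := by
      rw [Finset.sum_range_succ]
      congr 1
      · refine Finset.sum_congr rfl fun t ht => ?_
        simp only [ha, if_pos (Finset.mem_range.mp ht)]
      · simp [ha]
    have hQ : y ⬝ᵥ L.mulVec y = S1 + S2 / 2 := quad_id L hsymm hoff y
    have hQnn : 0 ≤ y ⬝ᵥ L.mulVec y := by
      have h2 : 0 ≤ S2 := Finset.sum_nonneg fun p _ =>
        mul_nonneg (abs_nonneg _) (sq_nonneg _)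
      linarith
    have hfin : ∑ t ∈ Finset.range (k + 1), a t ^ 2 ≤ 2 * (y ⬝ᵥ L.mulVec y) := by
      rw [hsq, hQ]; linarith
    have hkn : (k + 1 : ℝ) ≤ n := by exact_mod_cast hcard
    calc y i0 ^ 2 ≤ (k + 1 : ℝ) * ∑ t ∈ Finset.range (k + 1), a t ^ 2 := hcs
      _ ≤ (k + 1 : ℝ) * (2 * (y ⬝ᵥ L.mulVec y)) := by
          refine mul_le_mul_of_nonneg_left hfin (by positivity)
      _ ≤ (n : ℝ) * (2 * (y ⬝ᵥ L.mulVec y)) := by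
          refine mul_le_mul_of_nonneg_right hkn (by linarith)
      _ = 2 * n * (y ⬝ᵥ L.mulVec y) := by ring
  · exfalso
    push_neg at hex
    refine kernel_case (i0 := i0) hsymm hoff (fun v hv => ?_) hinv
    obtain ⟨z, hz⟩ := hsl_int v
    have h1 : (0:ℝ) ≤ (z:ℝ) := hz ▸ hsl_nonneg v
    have h2 : (z:ℝ) < 1 := hz ▸ hex v hv
    have : z = 0 := by
      have h1' : 0 ≤ z := by exact_mod_cast h1
      have h2' : z < 1 := by exact_mod_cast h2
      omega
    show sl v = 0
    rw [hz, this]; norm_num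
end

/-- For an `n × n` invertible SDDM matrix `L` with integer entries in
`[-U, U]` (`U ≥ 2`, `n ≥ 2`), every diagonal index `j` satisfies
`Lⱼⱼ · (L⁻¹)ⱼⱼ ≤ n² U ≤ (nU)²`; equivalently `log_{nU} (Lⱼⱼ (L⁻¹)ⱼⱼ) ≤ 2`. -/
theorem sddm_diag_product_upper_bound {n : ℕ} (hn : 2 ≤ n) (U : ℕ) (hU : 2 ≤ U)
    (L : Matrix (Fin n) (Fin n) ℝ)
    (hsymm : L.IsSymm)
    (hoff : ∀ i j, i ≠ j → L i j ≤ 0)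
    (hdiag : ∀ i, 0 < L i i)
    (hdd : ∀ i, ∑ j ∈ Finset.univ.filter (fun j => j ≠ i), |L i j| ≤ L i i)
    (hint : ∀ i j, ∃ z : ℤ, L i j = (z : ℝ))
    (hbd : ∀ i j, |L i j| ≤ (U : ℝ))
    (hinv : IsUnit L) :
    ∀ j, L j j * L⁻¹ j j ≤ (n : ℝ) ^ 2 * U ∧ (n : ℝ) ^ 2 * U ≤ ((n : ℝ) * U) ^ 2 ∧
      Real.logb ((n : ℝ) * U) (L j j * L⁻¹ j j) ≤ 2 := by
  intro j
  have hdet : IsUnit L.det := (Matrix.isUnit_iff_isUnit_det L).mp hinv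
  have hn2 : (2 : ℝ) ≤ (n : ℝ) := by exact_mod_cast hn
  have hU2 : (2 : ℝ) ≤ (U : ℝ) := by exact_mod_cast hU
  set x : Fin n → ℝ := fun i => L⁻¹ i j with hx
  have hLx : L.mulVec x = fun i => (1 : Matrix (Fin n) (Fin n) ℝ) i j := by
    funext i
    show ∑ k, L i k * L⁻¹ k j = _
    rw [← Matrix.mul_apply, Matrix.mul_nonsing_inv L hdet]
  have hQ : x ⬝ᵥ L.mulVec x = L⁻¹ j j := by
    rw [hLx]
    show ∑ i, x i * (1 : Matrix (Fin n) (Fin n) ℝ) i j = L⁻¹ j j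
    simp [Matrix.one_apply, hx]
  set t : ℝ := L⁻¹ j j with htdef
  have ht0 : 0 ≤ t := by
    rw [← hQ]; exact quad_nonneg hsymm hoff hdd x
  have hkey : t ^ 2 ≤ 2 * n * t := by
    have h := key_bound hsymm hoff hdd hint hinv x j
    rw [hQ] at h
    exact h
  have ht2n : t ≤ 2 * n := by nlinarith
  have hLU : L j j ≤ (U : ℝ) := by
    have := hbd j j
    rwa [abs_of_pos (hdiag j)] at this
  have part1 : L j j * t ≤ (n : ℝ) ^ 2 * U := by
    have h1 : L j j * t ≤ (U : ℝ) * t := mul_le_mul_of_nonneg_right hLU ht0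
    have h2 : (U : ℝ) * t ≤ (U : ℝ) * (2 * n) :=
      mul_le_mul_of_nonneg_left ht2n (by linarith)
    have h3 : 0 ≤ ((n : ℝ) ^ 2 - 2 * (n : ℝ)) * (U : ℝ) :=
      mul_nonneg (by nlinarith) (by linarith)
    nlinarith
  have part2 : (n : ℝ) ^ 2 * U ≤ ((n : ℝ) * U) ^ 2 := by nlinarith
  refine ⟨part1, part2, ?_⟩
  have hb : (1 : ℝ) < (n : ℝ) * U := by nlinarith
  have hle : L j j * t ≤ ((n : ℝ) * U) ^ 2 := le_trans part1 part2
  have hnn : 0 ≤ L j j * t := mul_nonneg (le_of_lt (hdiag j)) ht0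
  rcases eq_or_lt_of_le hnn with h0 | hpos
  · rw [← h0, Real.logb_zero]; norm_num
  · rw [Real.logb_le_iff_le_rpow hb hpos]
    calc L j j * t ≤ ((n : ℝ) * U) ^ 2 := hle
      _ = ((n : ℝ) * U) ^ (2 : ℝ) := by
          rw [← Real.rpow_natCast ((n : ℝ) * U) 2]; norm_num
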